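/- Every X ∈ 𝔤 can be decomposed as X = Y + Z where Y, Z ∈ 𝔤, the range of Y is contained in W, and Z vanishes on W (W ⊆ ker Z). In other words, 𝔤 = (𝔤 ∩ {X : range X ⊆ W}) + (𝔤 ∩ {X : W ⊆ ker X}). -/

import Mathlib

/-- Membership in the Lie algebra `𝔤`. -/
def InG {V : Type*} [AddCommGroup V] [Module ℝ V]
    (η : V →ₗ[ℝ] V →ₗ[ℝ] ℝ)
    (h : Module.Dual ℝ V →ₗ[ℝ] Module.Dual ℝ V →ₗ[ℝ] ℝ)
    (X : V →ₗ[ℝ] V) : Prop :=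
  (∀ v v' : V, η (X v) v' + η v (X v') = 0) ∧
  (∀ α α' : Module.Dual ℝ V, h (α ∘ₗ X) α' + h α (α' ∘ₗ X) = 0)

/-- `𝔤 = (𝔤 ∩ {range ⊆ W}) + (𝔤 ∩ {W ⊆ ker})`: every `X ∈ 𝔤` splits as
`X = Y + Z` with `Y, Z ∈ 𝔤`, `range Y ⊆ W` and `W ⊆ ker Z`. -/
theorem g_decomposition
    {V : Type*} [AddCommGroup V] [Module ℝ V] [FiniteDimensional ℝ V]
    (W : Submodule ℝ V)
    (η : V →ₗ[ℝ] V →ₗ[ℝ] ℝ)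
    (hη_symm : ∀ v v' : V, η v v' = η v' v)
    (hη_rad : ∀ v : V, (∀ v' : V, η v v' = 0) ↔ v ∈ W)
    (h : Module.Dual ℝ V →ₗ[ℝ] Module.Dual ℝ V →ₗ[ℝ] ℝ)
    (hh_symm : ∀ α α' : Module.Dual ℝ V, h α α' = h α' α)
    (hh_rad : ∀ α : Module.Dual ℝ V,
      (∀ α' : Module.Dual ℝ V, h α α' = 0) ↔ α ∈ W.dualAnnihilator)
    (X : V →ₗ[ℝ] V) (hX : InG η h X) :
    ∃ Y Z : V →ₗ[ℝ] V, InG η h Y ∧ InG η h Z ∧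
      LinearMap.range Y ≤ W ∧ W ≤ LinearMap.ker Z ∧ X = Y + Z := by
  obtain ⟨U, hU⟩ := Submodule.exists_isCompl W
  set P : V →ₗ[ℝ] V := W.subtype ∘ₗ (W.projectionOnto U hU) with hP
  have hPmem : ∀ v : V, P v ∈ W := fun v => (W.projectionOnto U hU v).2
  have hPW : ∀ w ∈ W, P w = w := fun w hw => by
    simp [hP, Submodule.projectionOnto_apply_left hU ⟨w, hw⟩]
  -- X preserves W
  have hXW : ∀ w ∈ W, X w ∈ W := by
    intro w hw
    rw [← hη_rad]
    intro v'
    have h1 := hX.1 w v'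
    have h2 : η w (X v') = 0 := (hη_rad w).mpr hw (X v')
    linarith
  set Y : V →ₗ[ℝ] V := X ∘ₗ P with hY
  set Z : V →ₗ[ℝ] V := X - Y with hZ
  have hYmem : ∀ v : V, Y v ∈ W := fun v => hXW _ (hPmem v)
  have hZker : ∀ w ∈ W, Z w = 0 := by
    intro w hw
    simp [hZ, hY, hPW w hw]
  -- Y is η-skew
  have hYη : ∀ v v' : V, η (Y v) v' + η v (Y v') = 0 := by
    intro v v'
    have h1 : η (Y v) v' = 0 := (hη_rad (Y v)).mpr (hYmem v) v'
    have h2 : η v (Y v') = 0 := by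
      rw [hη_symm]; exact (hη_rad (Y v')).mpr (hYmem v') v
    linarith
  -- Z is η-skew
  have hZη : ∀ v v' : V, η (Z v) v' + η v (Z v') = 0 := by
    intro v v'
    have h1 := hX.1 v v'
    have h2 := hYη v v'
    have e1 : Z v = X v - Y v := by simp [hZ]
    have e2 : Z v' = X v' - Y v' := by simp [hZ]
    rw [e1, e2]
    simp only [map_sub, LinearMap.sub_apply]
    linarith
  -- Z is h-skew
  have hZh : ∀ α α' : Module.Dual ℝ V, h (α ∘ₗ Z) α' + h α (α' ∘ₗ Z) = 0 := by
    intro α α'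
    have hann : ∀ β : Module.Dual ℝ V, (β ∘ₗ Z) ∈ W.dualAnnihilator := by
      intro β
      rw [Submodule.mem_dualAnnihilator]
      intro w hw
      simp [hZker w hw]
    have h1 : h (α ∘ₗ Z) α' = 0 := (hh_rad _).mpr (hann α) α'
    have h2 : h α (α' ∘ₗ Z) = 0 := by
      rw [hh_symm]; exact (hh_rad _).mpr (hann α') α
    linarith
  -- Y is h-skew
  have hYh : ∀ α α' : Module.Dual ℝ V, h (α ∘ₗ Y) α' + h α (α' ∘ₗ Y) = 0 := by
    intro α α'
    have e : ∀ β : Module.Dual ℝ V, β ∘ₗ Y = β ∘ₗ X - β ∘ₗ Z := by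
      intro β; ext v; simp [hZ]
    have h1 := hX.2 α α'
    have h2 := hZh α α'
    rw [e α, e α']
    simp only [map_sub, LinearMap.sub_apply]
    linarith
  refine ⟨Y, Z, ⟨hYη, hYh⟩, ⟨hZη, hZh⟩, ?_, ?_, ?_⟩
  · rintro _ ⟨v, rfl⟩; exact hYmem v
  · intro w hw; exact hZker w hw
  · simp [hZ]
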